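/- Let R, R̂ ∈ SO(3), r_m, r_a, r̃_a ∈ ℝ³, c₀ ∈ (0, 1], c₁ > 0 with ‖r_m × r_a‖ ≥ c₀‖r_m‖‖r_a‖, ‖r_a‖ ≥ c₁, and r_m ≠ 0, and set b_m = Rᵀr_m, b_a = Rᵀr_a. Then |Φ₀(R̂, b_m, b_a, r_a − r̃_a) − Φ₀(R̂, b_m, b_a, r_a)| ≤ 2‖r̃_a‖/(c₁c₀²), where for r ∈ ℝ³, Φ₀(R̂, b_m, b_a, r) := 3 − r_mᵀ R̂ b_m/‖b_m‖² − (r_m × r)ᵀ R̂ (b_m × b_a)/‖b_m × b_a‖² − (r_m × (r_m × r))ᵀ R̂ (b_m × (b_m × b_a))/‖b_m × (b_m × b_a)‖². -/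

import Mathlib

open Matrix

/-- `R ∈ SO(3)`: `R Rᵀ = I` and `det R = 1`. -/
def IsSO3 (R : Matrix (Fin 3) (Fin 3) ℝ) : Prop := R * Rᵀ = 1 ∧ R.det = 1

/-- Euclidean norm on `ℝ³`. -/
noncomputable def vnorm (x : Fin 3 → ℝ) : ℝ := Real.sqrt (x ⬝ᵥ x)

/-- The measurable cost
`Φ₀(R̂, b_m, b_a, r) = 3 - r_mᵀR̂b_m/‖b_m‖² - (r_m×r)ᵀR̂(b_m×b_a)/‖b_m×b_a‖²
  - (r_m×(r_m×r))ᵀR̂(b_m×(b_m×b_a))/‖b_m×(b_m×b_a)‖²` (with `r_m` the inertial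
magnetic field vector). -/
noncomputable def Phi0 (Rh : Matrix (Fin 3) (Fin 3) ℝ) (rm bm ba r : Fin 3 → ℝ) : ℝ :=
  3 - (rm ⬝ᵥ Rh.mulVec bm) / (bm ⬝ᵥ bm)
    - ((rm ⨯₃ r) ⬝ᵥ Rh.mulVec (bm ⨯₃ ba)) / ((bm ⨯₃ ba) ⬝ᵥ (bm ⨯₃ ba))
    - ((rm ⨯₃ (rm ⨯₃ r)) ⬝ᵥ Rh.mulVec (bm ⨯₃ (bm ⨯₃ ba))) /
        ((bm ⨯₃ (bm ⨯₃ ba)) ⬝ᵥ (bm ⨯₃ (bm ⨯₃ ba)))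

lemma dot_self_nonneg' (x : Fin 3 → ℝ) : 0 ≤ x ⬝ᵥ x := by
  simp only [dotProduct, Fin.sum_univ_three, ← sq]; positivity

lemma dot_self_pos (x : Fin 3 → ℝ) (hx : x ≠ 0) : 0 < x ⬝ᵥ x := by
  rcases lt_or_eq_of_le (dot_self_nonneg' x) with h | h
  · exact h
  · exfalso; apply hx
    have h' : x 0 * x 0 + x 1 * x 1 + x 2 * x 2 = 0 := by
      simpa [dotProduct, Fin.sum_univ_three] using h.symm
    have h0 : x 0 = 0 := mul_self_eq_zero.mp (by nlinarith [mul_self_nonneg (x 1), mul_self_nonneg (x 2)])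
    have h1 : x 1 = 0 := mul_self_eq_zero.mp (by nlinarith [mul_self_nonneg (x 0), mul_self_nonneg (x 2)])
    have h2 : x 2 = 0 := mul_self_eq_zero.mp (by nlinarith [mul_self_nonneg (x 0), mul_self_nonneg (x 1)])
    funext i; fin_cases i <;> assumption

lemma vnorm_sq (x : Fin 3 → ℝ) : vnorm x ^ 2 = x ⬝ᵥ x := by
  rw [vnorm, Real.sq_sqrt (dot_self_nonneg' x)]

lemma cauchy (u v : Fin 3 → ℝ) : |u ⬝ᵥ v| ≤ vnorm u * vnorm v := by
  have h : (u ⬝ᵥ v)^2 ≤ (u ⬝ᵥ u) * (v ⬝ᵥ v) := by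
    simp only [dotProduct, Fin.sum_univ_three]
    nlinarith [sq_nonneg (u 0 * v 1 - u 1 * v 0), sq_nonneg (u 0 * v 2 - u 2 * v 0),
      sq_nonneg (u 1 * v 2 - u 2 * v 1)]
  have h2 := Real.sqrt_le_sqrt h
  rwa [Real.sqrt_sq_eq_abs, Real.sqrt_mul (dot_self_nonneg' u), ← vnorm, ← vnorm] at h2

lemma lagrange (u v : Fin 3 → ℝ) : (u ⨯₃ v) ⬝ᵥ (u ⨯₃ v) = (u⬝ᵥu)*(v⬝ᵥv) - (u⬝ᵥv)^2 := by
  simp [crossProduct, dotProduct, Fin.sum_univ_three]; ring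

lemma vnorm_cross_le (u v : Fin 3 → ℝ) : vnorm (u ⨯₃ v) ≤ vnorm u * vnorm v := by
  rw [vnorm, lagrange]
  calc Real.sqrt ((u⬝ᵥu)*(v⬝ᵥv) - (u⬝ᵥv)^2) ≤ Real.sqrt ((u⬝ᵥu)*(v⬝ᵥv)) :=
        Real.sqrt_le_sqrt (by nlinarith [sq_nonneg (u ⬝ᵥ v)])
    _ = vnorm u * vnorm v := by rw [Real.sqrt_mul (dot_self_nonneg' u)]; rfl

lemma dot_preserve (A : Matrix (Fin 3) (Fin 3) ℝ) (h : A * Aᵀ = 1) (x y : Fin 3 → ℝ) :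
    (A.mulVec x) ⬝ᵥ (A.mulVec y) = x ⬝ᵥ y := by
  have h' : Aᵀ * A = 1 := mul_eq_one_comm.mp h
  rw [Matrix.dotProduct_mulVec, Matrix.vecMul_mulVec, h', Matrix.vecMul_one]

/-- `|Φ₀(R̂, b_m, b_a, r_a - r̃_a) - Φ₀(R̂, b_m, b_a, r_a)| ≤ 2‖r̃_a‖/(c₁ c₀²)`. -/
theorem stmt15 (R Rh : Matrix (Fin 3) (Fin 3) ℝ) (hR : IsSO3 R) (hRh : IsSO3 Rh)
    (rm ra rta : Fin 3 → ℝ) (c₀ c₁ : ℝ) (hc₀ : 0 < c₀) (hc₀' : c₀ ≤ 1) (hc₁ : 0 < c₁)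
    (hobs : vnorm (rm ⨯₃ ra) ≥ c₀ * vnorm rm * vnorm ra)
    (hra : vnorm ra ≥ c₁) (hrm : rm ≠ 0) :
    |Phi0 Rh rm (Rᵀ.mulVec rm) (Rᵀ.mulVec ra) (ra - rta) -
      Phi0 Rh rm (Rᵀ.mulVec rm) (Rᵀ.mulVec ra) ra| ≤ 2 * vnorm rta / (c₁ * c₀^2) := by
  set bm := Rᵀ.mulVec rm with hbm
  set ba := Rᵀ.mulVec ra with hba
  set P := vnorm rm with hPdef
  set Q := vnorm ra with hQdef
  set C := vnorm (rm ⨯₃ ra) with hCdef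
  set T := vnorm rta with hTdef
  have hP : 0 < P := Real.sqrt_pos.mpr (dot_self_pos rm hrm)
  have hQ : 0 < Q := lt_of_lt_of_le hc₁ hra
  have hT : 0 ≤ T := Real.sqrt_nonneg _
  have hC : 0 < C := lt_of_lt_of_le (by positivity) hobs
  have hA : Rᵀ * Rᵀᵀ = 1 := by
    rw [Matrix.transpose_transpose]; exact mul_eq_one_comm.mp hR.1
  have hd1 : bm ⬝ᵥ bm = rm ⬝ᵥ rm := dot_preserve _ hA _ _
  have hd2 : ba ⬝ᵥ ba = ra ⬝ᵥ ra := dot_preserve _ hA _ _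
  have hd3 : bm ⬝ᵥ ba = rm ⬝ᵥ ra := dot_preserve _ hA _ _
  have hD2 : (bm ⨯₃ ba) ⬝ᵥ (bm ⨯₃ ba) = C^2 := by
    rw [lagrange, hd1, hd2, hd3, ← lagrange, ← vnorm_sq]
  have hD3 : (bm ⨯₃ (bm ⨯₃ ba)) ⬝ᵥ (bm ⨯₃ (bm ⨯₃ ba)) = P^2 * C^2 := by
    rw [lagrange, dot_self_cross, hD2, hd1, ← vnorm_sq]; ring
  have hn2 : vnorm (bm ⨯₃ ba) = C := by
    rw [vnorm, hD2, Real.sqrt_sq hC.le]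
  have hn3 : vnorm (bm ⨯₃ (bm ⨯₃ ba)) = P * C := by
    rw [vnorm, hD3, show P^2*C^2 = (P*C)^2 by ring, Real.sqrt_sq (by positivity)]
  have hpres : ∀ w, vnorm (Rh.mulVec w) = vnorm w := fun w => by
    rw [vnorm, dot_preserve Rh hRh.1, vnorm]
  have hkey : Phi0 Rh rm bm ba (ra - rta) - Phi0 Rh rm bm ba ra =
      ((rm ⨯₃ rta) ⬝ᵥ Rh.mulVec (bm ⨯₃ ba)) / ((bm ⨯₃ ba) ⬝ᵥ (bm ⨯₃ ba))
    + ((rm ⨯₃ (rm ⨯₃ rta)) ⬝ᵥ Rh.mulVec (bm ⨯₃ (bm ⨯₃ ba))) /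
        ((bm ⨯₃ (bm ⨯₃ ba)) ⬝ᵥ (bm ⨯₃ (bm ⨯₃ ba))) := by
    simp only [Phi0, map_sub, sub_dotProduct]
    ring
  have hN2 : |(rm ⨯₃ rta) ⬝ᵥ Rh.mulVec (bm ⨯₃ ba)| ≤ P * T * C := by
    calc |(rm ⨯₃ rta) ⬝ᵥ Rh.mulVec (bm ⨯₃ ba)|
        ≤ vnorm (rm ⨯₃ rta) * vnorm (Rh.mulVec (bm ⨯₃ ba)) := cauchy _ _
      _ = vnorm (rm ⨯₃ rta) * C := by rw [hpres, hn2]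
      _ ≤ P * T * C := mul_le_mul_of_nonneg_right (vnorm_cross_le rm rta) hC.le
  have hN3 : |(rm ⨯₃ (rm ⨯₃ rta)) ⬝ᵥ Rh.mulVec (bm ⨯₃ (bm ⨯₃ ba))| ≤ (P * (P * T)) * (P * C) := by
    calc |(rm ⨯₃ (rm ⨯₃ rta)) ⬝ᵥ Rh.mulVec (bm ⨯₃ (bm ⨯₃ ba))|
        ≤ vnorm (rm ⨯₃ (rm ⨯₃ rta)) * vnorm (Rh.mulVec (bm ⨯₃ (bm ⨯₃ ba))) := cauchy _ _
      _ = vnorm (rm ⨯₃ (rm ⨯₃ rta)) * (P * C) := by rw [hpres, hn3]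
      _ ≤ (P * (P * T)) * (P * C) := by
          apply mul_le_mul_of_nonneg_right _ (by positivity)
          calc vnorm (rm ⨯₃ (rm ⨯₃ rta)) ≤ P * vnorm (rm ⨯₃ rta) := vnorm_cross_le _ _
            _ ≤ P * (P * T) := mul_le_mul_of_nonneg_left (vnorm_cross_le _ _) hP.le
  rw [hkey]
  calc |((rm ⨯₃ rta) ⬝ᵥ Rh.mulVec (bm ⨯₃ ba)) / ((bm ⨯₃ ba) ⬝ᵥ (bm ⨯₃ ba))
      + ((rm ⨯₃ (rm ⨯₃ rta)) ⬝ᵥ Rh.mulVec (bm ⨯₃ (bm ⨯₃ ba))) /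
          ((bm ⨯₃ (bm ⨯₃ ba)) ⬝ᵥ (bm ⨯₃ (bm ⨯₃ ba)))|
      ≤ |(rm ⨯₃ rta) ⬝ᵥ Rh.mulVec (bm ⨯₃ ba)| / C^2
      + |(rm ⨯₃ (rm ⨯₃ rta)) ⬝ᵥ Rh.mulVec (bm ⨯₃ (bm ⨯₃ ba))| / (P^2 * C^2) := by
        rw [hD2, hD3]
        refine (abs_add_le _ _).trans ?_
        rw [abs_div, abs_div, abs_of_pos (by positivity : (0:ℝ) < C^2),
          abs_of_pos (by positivity : (0:ℝ) < P^2 * C^2)]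
    _ ≤ (P * T * C) / C^2 + ((P * (P * T)) * (P * C)) / (P^2 * C^2) := by
        gcongr
    _ = 2 * (P * T) / C := by field_simp; ring
    _ ≤ 2 * T / (c₁ * c₀^2) := by
        rw [div_le_div_iff₀ hC (by positivity)]
        have h1 : c₀ * P * Q ≤ C := hobs
        nlinarith [mul_nonneg hT (sub_nonneg.mpr h1),
          mul_nonneg (mul_nonneg hT hc₀.le) (mul_nonneg hP.le (sub_nonneg.mpr (le_of_lt hQ))),
          mul_nonneg (mul_nonneg hT hc₀.le) (mul_nonneg hP.le (sub_nonneg.mpr hra)),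
          mul_nonneg (mul_nonneg (mul_nonneg hT hc₁.le) hP.le) (sub_nonneg.mpr hc₀'),
          mul_pos hP hQ]
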